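/- Let A be an n × n real symmetric matrix with nonnegative entries, and let P_A(z) = (1/2)·zᵀAz for complex vectors z. If the second-largest eigenvalue of A satisfies λ_2(A) ≤ 0, then P_A(z) ≠ 0 for all z ∈ ℂ^n with Re(z_i) > 0 for all i, unless A = 0. -/

import Mathlib

open Finset Matrix

lemma key_scalar {n : ℕ} (lam a b : Fin n → ℝ)
    (hone : ∀ i j : Fin n, i ≠ j → lam i ≤ 0 ∨ lam j ≤ 0)
    (h1 : 0 < ∑ k, lam k * a k * a k)
    (h2 : ∑ k, lam k * a k * a k = ∑ k, lam k * b k * b k)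
    (h3 : ∑ k, lam k * a k * b k = 0) : False := by
  obtain ⟨k₀, hk₀⟩ : ∃ k, 0 < lam k := by
    by_contra h
    push_neg at h
    have : ∑ k, lam k * a k * a k ≤ 0 :=
      Finset.sum_nonpos fun k _ => by nlinarith [mul_self_nonneg (a k), h k]
    linarith
  have hneg : ∀ k, k ≠ k₀ → lam k ≤ 0 := fun k hk =>
    (hone k k₀ hk).resolve_right (by linarith)
  set s : Finset (Fin n) := Finset.univ.erase k₀ with hs
  have hmem : ∀ k ∈ s, lam k ≤ 0 := fun k hk => hneg k (Finset.ne_of_mem_erase hk)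
  have hsplit : ∀ f : Fin n → ℝ, ∑ k, f k = f k₀ + ∑ k ∈ s, f k := fun f => by
    rw [hs, ← Finset.add_sum_erase _ f (Finset.mem_univ k₀)]
  set c := ∑ k, lam k * a k * a k with hc
  set Sa := ∑ k ∈ s, lam k * a k * a k with hSa
  set Sb := ∑ k ∈ s, lam k * b k * b k with hSb
  set Sab := ∑ k ∈ s, lam k * a k * b k with hSab
  have ea : c = lam k₀ * a k₀ * a k₀ + Sa := hsplit _
  have eb : c = lam k₀ * b k₀ * b k₀ + Sb := h2.trans (hsplit _)
  have eab : lam k₀ * a k₀ * b k₀ + Sab = 0 := (hsplit _).symm.trans h3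
  have hSanp : Sa ≤ 0 := Finset.sum_nonpos fun k hk => by
    nlinarith [mul_self_nonneg (a k), hmem k hk]
  have hSbnp : Sb ≤ 0 := Finset.sum_nonpos fun k hk => by
    nlinarith [mul_self_nonneg (b k), hmem k hk]
  have hcs : Sab ^ 2 ≤ Sa * Sb := by
    have h := Finset.sum_sq_le_sum_mul_sum_of_sq_eq_mul s
      (r := fun k => -(lam k * a k * b k))
      (f := fun k => -(lam k * a k * a k)) (g := fun k => -(lam k * b k * b k))
      (fun k hk => by show (0:ℝ) ≤ -(lam k * a k * a k); nlinarith [mul_self_nonneg (a k), hmem k hk])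
      (fun k hk => by show (0:ℝ) ≤ -(lam k * b k * b k); nlinarith [mul_self_nonneg (b k), hmem k hk])
      (fun k hk => by show (-(lam k * a k * b k))^2 = -(lam k * a k * a k) * -(lam k * b k * b k); ring)
    simp only [Finset.sum_neg_distrib] at h
    calc Sab ^ 2 = (-Sab) ^ 2 := by ring
    _ ≤ (-Sa) * (-Sb) := h
    _ = Sa * Sb := by ring
  have hprod : (lam k₀ * a k₀ * b k₀) ^ 2
      = (lam k₀ * a k₀ * a k₀) * (lam k₀ * b k₀ * b k₀) := by ring
  have h4 : Sab ^ 2 = (c - Sa) * (c - Sb) := by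
    have hw : lam k₀ * a k₀ * b k₀ = -Sab := by linarith
    calc Sab ^ 2 = (lam k₀ * a k₀ * b k₀) ^ 2 := by rw [hw]; ring
    _ = (lam k₀ * a k₀ * a k₀) * (lam k₀ * b k₀ * b k₀) := hprod
    _ = (c - Sa) * (c - Sb) := by
        rw [show lam k₀ * a k₀ * a k₀ = c - Sa by linarith,
          show lam k₀ * b k₀ * b k₀ = c - Sb by linarith]
  nlinarith [h4, hcs, h1, hSanp, hSbnp, mul_nonpos_of_nonneg_of_nonpos (le_of_lt h1) hSanp, mul_nonpos_of_nonneg_of_nonpos (le_of_lt h1) hSbnp, mul_pos h1 h1]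

theorem stmt9 {n : ℕ} (A : Matrix (Fin n) (Fin n) ℝ) (hsymm : A.IsHermitian)
    (hnn : ∀ i j, 0 ≤ A i j)
    (hl2 : ∀ i j : Fin n, i ≠ j →
      hsymm.eigenvalues i ≤ 0 ∨ hsymm.eigenvalues j ≤ 0)
    (hA : A ≠ 0) (z : Fin n → ℂ) (hz : ∀ i, 0 < (z i).re) :
    (1 / 2 : ℂ) * ∑ i, ∑ j, (A i j : ℂ) * z i * z j ≠ 0 := by
  intro h0
  have hS : (∑ i, ∑ j, (A i j : ℂ) * z i * z j) = 0 := by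
    rcases mul_eq_zero.1 h0 with h | h
    · norm_num at h
    · exact h
  set x : Fin n → ℝ := fun i => (z i).re with hx
  set y : Fin n → ℝ := fun i => (z i).im with hy
  -- real and imaginary parts
  have hre : (∑ i, ∑ j, (A i j : ℂ) * z i * z j).re = x ⬝ᵥ A *ᵥ x - y ⬝ᵥ A *ᵥ y := by
    simp only [Complex.re_sum, Complex.mul_re, Complex.mul_im, Complex.ofReal_re,
      Complex.ofReal_im, dotProduct, Matrix.mulVec, Finset.mul_sum,
      ← Finset.sum_sub_distrib]
    congr 1; ext i; congr 1; ext j; ring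
  have him : (∑ i, ∑ j, (A i j : ℂ) * z i * z j).im = x ⬝ᵥ A *ᵥ y + y ⬝ᵥ A *ᵥ x := by
    simp only [Complex.im_sum, Complex.mul_re, Complex.mul_im, Complex.ofReal_re,
      Complex.ofReal_im, dotProduct, Matrix.mulVec, Finset.mul_sum,
      ← Finset.sum_add_distrib]
    congr 1; ext i; congr 1; ext j; ring
  -- positivity of the quadratic form at x
  have hxpos : 0 < x ⬝ᵥ A *ᵥ x := by
    obtain ⟨i, j, hij⟩ : ∃ i j, A i j ≠ 0 := by
      by_contra h
      push_neg at h
      exact hA (by ext i j; simp [h i j])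
    have hij' : 0 < A i j := lt_of_le_of_ne (hnn i j) (Ne.symm hij)
    have hterm : ∀ p ∈ (Finset.univ : Finset (Fin n)), 0 ≤ x p * (∑ q, A p q * x q) := by
      intro p _
      exact mul_nonneg (le_of_lt (hz p)) (Finset.sum_nonneg fun q _ =>
        mul_nonneg (hnn p q) (le_of_lt (hz q)))
    have hpos1 : 0 < x i * (∑ q, A i q * x q) := by
      apply mul_pos (hz i)
      calc (0:ℝ) < A i j * x j := mul_pos hij' (hz j)
      _ ≤ ∑ q, A i q * x q := Finset.single_le_sum
          (fun q _ => mul_nonneg (hnn i q) (le_of_lt (hz q))) (Finset.mem_univ j)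
    calc (0:ℝ) < x i * (∑ q, A i q * x q) := hpos1
    _ ≤ ∑ p, x p * (∑ q, A p q * x q) := Finset.single_le_sum hterm (Finset.mem_univ i)
    _ = x ⬝ᵥ A *ᵥ x := by simp [dotProduct, Matrix.mulVec]
  -- spectral representation of the bilinear form
  set V := (hsymm.eigenvectorUnitary : Matrix (Fin n) (Fin n) ℝ) with hV
  set f : (Fin n → ℝ) → (Fin n → ℝ) := fun v => (star V) *ᵥ v with hf
  have hrep : ∀ v w : Fin n → ℝ, v ⬝ᵥ A *ᵥ w
      = ∑ k, hsymm.eigenvalues k * f v k * f w k := by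
    intro v w
    conv_lhs => rw [hsymm.spectral_theorem, Unitary.conjStarAlgAut_apply]
    rw [← mulVec_mulVec, ← mulVec_mulVec, dotProduct_mulVec]
    have hvm : v ᵥ* V = (star V) *ᵥ v := by
      ext k
      simp [Matrix.vecMul, Matrix.mulVec, dotProduct, Matrix.star_apply, mul_comm]
    rw [hvm]
    simp only [hf]
    simp [dotProduct, Matrix.mulVec_diagonal]
    congr 1; ext k; ring
  -- extract the three conditions
  have hre0 : x ⬝ᵥ A *ᵥ x - y ⬝ᵥ A *ᵥ y = 0 := by rw [← hre, hS]; simp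
  have him0 : x ⬝ᵥ A *ᵥ y + y ⬝ᵥ A *ᵥ x = 0 := by rw [← him, hS]; simp
  have hsymb : y ⬝ᵥ A *ᵥ x = x ⬝ᵥ A *ᵥ y := by
    rw [hrep, hrep]
    congr 1; ext k; ring
  have h3 : ∑ k, hsymm.eigenvalues k * f x k * f y k = 0 := by
    rw [hsymb] at him0
    have : x ⬝ᵥ A *ᵥ y = 0 := by linarith
    rw [← hrep]; exact this
  have h1 : 0 < ∑ k, hsymm.eigenvalues k * f x k * f x k := by
    rw [← hrep]; exact hxpos
  have h2 : ∑ k, hsymm.eigenvalues k * f x k * f x k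
      = ∑ k, hsymm.eigenvalues k * f y k * f y k := by
    rw [← hrep, ← hrep]; linarith
  exact key_scalar hsymm.eigenvalues (f x) (f y) hl2 h1 h2 h3
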